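/- arXiv:1704.04391 — 2 statements merged into one kernel-verified Lean document; each statement's English description precedes it below -/
import Mathlib

section
/- Let q ≥ 1 be a real number, F : [0,∞)² → ℝ a continuous function homogeneous of degree q, and suppose the 1-homogeneous function G defined by G(u^q, v^q) = F(u, v) for all u, v ≥ 0 is concave. Then for all nonnegative functions u, v ∈ L^q(ℝ^N), ∫_{ℝ^N} F(u(x), v(x)) dx ≤ F(‖u‖_{L^q}, ‖v‖_{L^q}). -/
open Real MeasureTheory

lemma key_supergrad (G : ℝ × ℝ → ℝ)
    (hGhom : ∀ t : ℝ, 0 < t → ∀ a b : ℝ, 0 ≤ a → 0 ≤ b → G (t * a, t * b) = t * G (a, b))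
    (hGconc : ConcaveOn ℝ {z : ℝ × ℝ | 0 ≤ z.1 ∧ 0 ≤ z.2} G)
    (A B : ℝ) (hA : 0 < A) (hB : 0 < B) :
    ∃ p m : ℝ, p * A + m * B = G (A, B) ∧
      ∀ a b : ℝ, 0 ≤ a → 0 ≤ b → G (a, b) ≤ p * a + m * b := by
  set g : ℝ → ℝ := fun s => G (1, s) with hg
  -- g is concave on Ici 0
  have hgc : ConcaveOn ℝ (Set.Ici 0) g := by
    constructor
    · exact convex_Ici 0
    · intro x hx y hy wa wb hwa hwb hab
      have h1 : ((1 : ℝ), x) ∈ {z : ℝ × ℝ | 0 ≤ z.1 ∧ 0 ≤ z.2} := ⟨zero_le_one, hx⟩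
      have h2 : ((1 : ℝ), y) ∈ {z : ℝ × ℝ | 0 ≤ z.1 ∧ 0 ≤ z.2} := ⟨zero_le_one, hy⟩
      have := hGconc.2 h1 h2 hwa hwb hab
      simp only [Prod.smul_mk, smul_eq_mul, Prod.mk_add_mk, mul_one] at this
      rw [hab] at this
      simpa [g] using this
  have hgslice : ∀ a b : ℝ, 0 < a → 0 ≤ b → G (a, b) = a * g (b / a) := by
    intro a b ha hb
    have := hGhom a ha 1 (b / a) zero_le_one (div_nonneg hb ha.le)
    rw [mul_one, mul_div_cancel₀ _ ha.ne'] at this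
    exact this
  set s₀ : ℝ := B / A with hs₀def
  have hs₀ : 0 < s₀ := div_pos hB hA
  set S : Set ℝ := (fun t => (g t - g s₀) / (t - s₀)) '' Set.Ioi s₀ with hS
  have hSne : S.Nonempty := ⟨_, ⟨s₀ + 1, by simp, rfl⟩⟩
  have hSbdd : BddAbove S := by
    refine ⟨(g s₀ - g 0) / (s₀ - 0), ?_⟩
    rintro y ⟨t, ht, rfl⟩
    exact hgc.slope_anti_adjacent (Set.self_mem_Ici) (le_of_lt (hs₀.trans ht)) hs₀ ht
  set m : ℝ := sSup S with hm
  have key1 : ∀ s : ℝ, 0 ≤ s → g s ≤ g s₀ + m * (s - s₀) := by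
    intro s hs
    rcases lt_trichotomy s s₀ with hlt | heq | hgt
    · -- s < s₀ : every slope in S ≤ (g s₀ - g s)/(s₀ - s), so m ≤ that
      have hmle : m ≤ (g s₀ - g s) / (s₀ - s) := by
        apply csSup_le hSne
        rintro y ⟨t, ht, rfl⟩
        exact hgc.slope_anti_adjacent hs (le_of_lt (hs₀.trans ht)) hlt ht
      have h1 : 0 < s₀ - s := by linarith
      rw [le_div_iff₀ h1] at hmle
      linarith
    · simp [heq]
    · have : (g s - g s₀) / (s - s₀) ≤ m := le_csSup hSbdd ⟨s, hgt, rfl⟩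
      have h1 : 0 < s - s₀ := by linarith
      rw [div_le_iff₀ h1] at this
      linarith
  refine ⟨g s₀ - m * s₀, m, ?_, ?_⟩
  · have : G (A, B) = A * g s₀ := hgslice A B hA hB.le
    rw [this]; field_simp [hs₀def]
    have hsA : s₀ * A = B := by rw [hs₀def]; field_simp
    linear_combination (-m) * hsA
  · intro a b ha hb
    rcases ha.lt_or_eq with ha' | ha'
    · rw [hgslice a b ha' hb]
      have := key1 (b / a) (div_nonneg hb ha'.le)
      calc a * g (b / a) ≤ a * (g s₀ + m * (b / a - s₀)) := by
            exact mul_le_mul_of_nonneg_left this ha'.le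
        _ = (g s₀ - m * s₀) * a + m * b := by field_simp; ring
    · -- a = 0 case: G(0,b) ≤ m*b via concavity trick
      subst ha'
      have h1 : ((0 : ℝ), b) ∈ {z : ℝ × ℝ | 0 ≤ z.1 ∧ 0 ≤ z.2} := ⟨le_refl 0, hb⟩
      have h2 : ((2 * A : ℝ), 2 * B) ∈ {z : ℝ × ℝ | 0 ≤ z.1 ∧ 0 ≤ z.2} :=
        ⟨by positivity, by positivity⟩
      have hconc := hGconc.2 h1 h2 (by norm_num : (0:ℝ) ≤ 1/2) (by norm_num : (0:ℝ) ≤ 1/2)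
        (by norm_num)
      simp only [Prod.smul_mk, smul_eq_mul, Prod.mk_add_mk] at hconc
      have hmid : ((1:ℝ)/2 * 0 + 1/2 * (2*A), (1:ℝ)/2 * b + 1/2 * (2*B)) = (A, (b + 2*B)/2) := by
        norm_num; constructor <;> ring
      rw [hmid] at hconc
      have hG2 : G (2*A, 2*B) = 2 * G (A, B) := hGhom 2 two_pos A B hA.le hB.le
      have hGAB : G (A, B) = A * g s₀ := hgslice A B hA hB.le
      have hb2 : (0:ℝ) ≤ (b + 2*B)/2 := by positivity
      have hmidbd : G (A, (b + 2*B)/2) ≤ A * g s₀ + m * (b/2) := by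
        rw [hgslice A _ hA hb2]
        have := key1 (((b + 2*B)/2) / A) (div_nonneg hb2 hA.le)
        calc A * g (((b + 2*B)/2) / A) ≤ A * (g s₀ + m * (((b + 2*B)/2) / A - s₀)) :=
              mul_le_mul_of_nonneg_left this hA.le
          _ = A * g s₀ + m * (b/2) := by
              field_simp [hs₀def]
              have hAs : A * s₀ = B := by rw [hs₀def]; field_simp
              linear_combination (-2 * m) * hAs
      nlinarith [hconc, hmidbd]
/-- Hölder-type inequality for a continuous `q`-homogeneous function `F` on `[0,∞)²`
whose associated 1-homogeneous function `G` (with `G(u^q, v^q) = F(u,v)`) is concave: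
for nonnegative `u, v ∈ L^q(ℝ^N)`, `∫ F(u, v) ≤ F(‖u‖_{L^q}, ‖v‖_{L^q})`. -/
theorem holder_type_inequality (N : ℕ) (q : ℝ) (hq : 1 ≤ q) (F : ℝ × ℝ → ℝ)
    (hFcont : ContinuousOn F {z : ℝ × ℝ | 0 ≤ z.1 ∧ 0 ≤ z.2})
    (hhom : ∀ t : ℝ, 0 < t → ∀ u v : ℝ, 0 ≤ u → 0 ≤ v →
      F (t * u, t * v) = t ^ q * F (u, v))
    (G : ℝ × ℝ → ℝ)
    (hG : ∀ u v : ℝ, 0 ≤ u → 0 ≤ v → G (u ^ q, v ^ q) = F (u, v))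
    (hGhom : ∀ t : ℝ, 0 < t → ∀ a b : ℝ, 0 ≤ a → 0 ≤ b → G (t * a, t * b) = t * G (a, b))
    (hGconc : ConcaveOn ℝ {z : ℝ × ℝ | 0 ≤ z.1 ∧ 0 ≤ z.2} G)
    (u v : EuclideanSpace ℝ (Fin N) → ℝ)
    (hu0 : ∀ x, 0 ≤ u x) (hv0 : ∀ x, 0 ≤ v x)
    (huq : Integrable (fun x => u x ^ q)) (hvq : Integrable (fun x => v x ^ q))
    (hFint : Integrable (fun x => F (u x, v x))) :
    ∫ x, F (u x, v x) ≤
      F ((∫ x, u x ^ q) ^ (1 / q), (∫ x, v x ^ q) ^ (1 / q)) := by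
  have hqpos : 0 < q := lt_of_lt_of_le one_pos hq
  have hq0 : q ≠ 0 := hqpos.ne'
  set A : ℝ := ∫ x, u x ^ q with hAdef
  set B : ℝ := ∫ x, v x ^ q with hBdef
  have hA0 : 0 ≤ A := integral_nonneg fun x => rpow_nonneg (hu0 x) q
  have hB0 : 0 ≤ B := integral_nonneg fun x => rpow_nonneg (hv0 x) q
  have hrpow : ∀ c : ℝ, 0 ≤ c → (c ^ (1/q)) ^ q = c := by
    intro c hc
    rw [← Real.rpow_mul hc, one_div_mul_cancel hq0, Real.rpow_one]
  have hRHS : F (A ^ (1/q), B ^ (1/q)) = G (A, B) := by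
    rw [← hG (A ^ (1/q)) (B ^ (1/q)) (rpow_nonneg hA0 _) (rpow_nonneg hB0 _),
      hrpow A hA0, hrpow B hB0]
  rw [hRHS]
  have hG00 : G (0, 0) = 0 := by
    have := hGhom 2 two_pos 0 0 le_rfl le_rfl
    simp only [mul_zero] at this
    linarith
  have hGpt : ∀ x, F (u x, v x) = G (u x ^ q, v x ^ q) :=
    fun x => (hG _ _ (hu0 x) (hv0 x)).symm
  rcases hA0.eq_or_lt with hA | hA
  · -- A = 0 : u = 0 a.e.
    have huz : (fun x => u x ^ q) =ᵐ[volume] 0 := by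
      rw [← integral_eq_zero_iff_of_nonneg (fun x => rpow_nonneg (hu0 x) q) huq]
      exact hA.symm
    have heq : (fun x => F (u x, v x)) =ᵐ[volume] (fun x => v x ^ q * G (0, 1)) := by
      filter_upwards [huz] with x hx
      have hux : u x = 0 := by
        have := (Real.rpow_eq_zero (hu0 x) hq0).mp hx
        exact this
      rw [hGpt x, hux, Real.zero_rpow hq0]
      rcases (rpow_nonneg (hv0 x) q).eq_or_lt with h | h
      · rw [← h, hG00]; ring
      · have := hGhom (v x ^ q) h 0 1 le_rfl zero_le_one
        rw [mul_zero, mul_one] at this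
        exact this
    rw [integral_congr_ae heq, integral_mul_const, ← hBdef, ← hA]
    rcases hB0.eq_or_lt with hB | hB
    · rw [← hB, hG00]; simp
    · have := hGhom B hB 0 1 le_rfl zero_le_one
      rw [mul_zero, mul_one] at this
      exact le_of_eq this.symm
  rcases hB0.eq_or_lt with hB | hB
  · -- B = 0 : v = 0 a.e.
    have hvz : (fun x => v x ^ q) =ᵐ[volume] 0 := by
      rw [← integral_eq_zero_iff_of_nonneg (fun x => rpow_nonneg (hv0 x) q) hvq]
      exact hB.symm
    have heq : (fun x => F (u x, v x)) =ᵐ[volume] (fun x => u x ^ q * G (1, 0)) := by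
      filter_upwards [hvz] with x hx
      have hvx : v x = 0 := (Real.rpow_eq_zero (hv0 x) hq0).mp hx
      rw [hGpt x, hvx, Real.zero_rpow hq0]
      rcases (rpow_nonneg (hu0 x) q).eq_or_lt with h | h
      · rw [← h, hG00]; ring
      · have := hGhom (u x ^ q) h 1 0 zero_le_one le_rfl
        rw [mul_zero, mul_one] at this
        exact this
    rw [integral_congr_ae heq, integral_mul_const, ← hAdef, ← hB]
    have := hGhom A hA 1 0 zero_le_one le_rfl
    rw [mul_zero, mul_one] at this
    exact le_of_eq this.symm
  · -- main case
    obtain ⟨p, m, heq, hle⟩ := key_supergrad G hGhom hGconc A B hA hB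
    have hint : Integrable (fun x => p * u x ^ q + m * v x ^ q) :=
      (huq.const_mul p).add (hvq.const_mul m)
    have hptle : ∀ x, F (u x, v x) ≤ p * u x ^ q + m * v x ^ q := by
      intro x
      rw [hGpt x]
      exact hle _ _ (rpow_nonneg (hu0 x) q) (rpow_nonneg (hv0 x) q)
    calc ∫ x, F (u x, v x) ≤ ∫ x, (p * u x ^ q + m * v x ^ q) :=
          integral_mono hFint hint hptle
      _ = p * A + m * B := by
          rw [integral_add (huq.const_mul p) (hvq.const_mul m),
            integral_const_mul, integral_const_mul]
      _ = G (A, B) := heq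
end

section
/- Let η_R : ℝ^N → [0,1] be Lipschitz with |∇η_R| ≤ c/R, η_R = 0 on B_R and η_R = 1 outside B_{2R}. If (u_n) is a bounded sequence in H^s(ℝ^N) with u_n → u strongly in L²_loc(ℝ^N), then lim_{R → ∞} limsup_{n → ∞} ∬_{ℝ^{2N}} |η_R(x) − η_R(y)|² / |x−y|^{N+2s} · u_n(x)² dx dy = 0. -/
open Real MeasureTheory Filter Metric Set Module
open scoped ENNReal

lemma intOn_ball_rpow {N : ℕ} {q : ℝ} (hq : -(N : ℝ) < q) :
    IntegrableOn (fun z : EuclideanSpace ℝ (Fin N) => ‖z‖ ^ q) (ball 0 1) volume := by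
  have hmeas : Measurable fun z : EuclideanSpace ℝ (Fin N) => ‖z‖ ^ q := by
    fun_prop
  rcases le_or_gt 0 q with hq0 | hq0
  · refine Integrable.mono' (g := fun _ => (1 : ℝ))
      (integrableOn_const measure_ball_lt_top.ne) hmeas.aestronglyMeasurable ?_
    filter_upwards [ae_restrict_mem measurableSet_ball] with z hz
    rw [Real.norm_of_nonneg (rpow_nonneg (norm_nonneg _) _)]
    exact Real.rpow_le_one (norm_nonneg _) (le_of_lt (mem_ball_zero_iff.1 hz)) hq0
  · constructor
    · exact hmeas.aestronglyMeasurable.restrict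
    · rw [HasFiniteIntegral, lintegral_enorm_of_nonneg
        (fun z => rpow_nonneg (norm_nonneg _) _)]
      rw [lintegral_eq_lintegral_meas_le _
        (Eventually.of_forall fun z => rpow_nonneg (norm_nonneg _) _) hmeas.aemeasurable]
      set μr := volume.restrict (ball (0 : EuclideanSpace ℝ (Fin N)) 1)
      set mB := volume (ball (0 : EuclideanSpace ℝ (Fin N)) 1) with hmB
      have hmBlt : mB < ∞ := measure_ball_lt_top
      calc ∫⁻ t in Set.Ioi (0:ℝ), μr {a | t ≤ ‖a‖ ^ q}
          ≤ ∫⁻ t in Set.Ioc 0 1 ∪ Set.Ioi 1, μr {a | t ≤ ‖a‖ ^ q} :=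
            lintegral_mono_set Ioi_subset_Ioc_union_Ioi
        _ ≤ (∫⁻ t in Set.Ioc 0 1, μr {a | t ≤ ‖a‖ ^ q}) +
            ∫⁻ t in Set.Ioi 1, μr {a | t ≤ ‖a‖ ^ q} := lintegral_union_le _ _ _
        _ < ∞ := by
            refine ENNReal.add_lt_top.2 ⟨?_, ?_⟩
            · calc (∫⁻ t in Set.Ioc 0 1, μr {a | t ≤ ‖a‖ ^ q})
                  ≤ ∫⁻ _ in Set.Ioc (0:ℝ) 1, mB := by
                    refine setLIntegral_mono' measurableSet_Ioc fun t _ => ?_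
                    exact le_trans (measure_mono (Set.subset_univ _))
                      (le_of_eq (Measure.restrict_apply_univ _))
                _ = mB * volume (Set.Ioc (0:ℝ) 1) := by
                    rw [setLIntegral_const]
                _ < ∞ := ENNReal.mul_lt_top hmBlt (by simp)
            · have hr : q⁻¹ * (N : ℝ) < -1 := by
                rw [inv_mul_eq_div, div_lt_iff_of_neg hq0]
                nlinarith
              calc (∫⁻ t in Set.Ioi 1, μr {a | t ≤ ‖a‖ ^ q})
                  ≤ ∫⁻ t in Set.Ioi 1, ENNReal.ofReal (t ^ (q⁻¹ * (N : ℝ))) * mB := by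
                    refine setLIntegral_mono' measurableSet_Ioi fun t ht => ?_
                    have ht1 : (1:ℝ) < t := ht
                    have ht0 : (0:ℝ) < t := lt_trans one_pos ht1
                    have hsub : {a : EuclideanSpace ℝ (Fin N) | t ≤ ‖a‖ ^ q}
                        ⊆ closedBall 0 (t ^ q⁻¹) := by
                      intro z hz
                      simp only [Set.mem_setOf_eq] at hz
                      have hz0 : 0 < ‖z‖ := by
                        by_contra h
                        push_neg at h
                        have : ‖z‖ = 0 := le_antisymm h (norm_nonneg _)
                        rw [this, Real.zero_rpow (ne_of_lt hq0)] at hz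
                        linarith
                      rw [mem_closedBall_zero_iff]
                      exact (Real.le_rpow_inv_iff_of_neg hz0 ht0 hq0).2 hz
                    calc μr {a | t ≤ ‖a‖ ^ q}
                        ≤ volume {a : EuclideanSpace ℝ (Fin N) | t ≤ ‖a‖ ^ q} :=
                          Measure.le_iff'.1 Measure.restrict_le_self _
                      _ ≤ volume (closedBall (0 : EuclideanSpace ℝ (Fin N)) (t ^ q⁻¹)) :=
                          measure_mono hsub
                      _ = ENNReal.ofReal ((t ^ q⁻¹) ^ Module.finrank ℝ (EuclideanSpace ℝ (Fin N))) * mB := by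
                          rw [Measure.addHaar_closedBall _ _ (rpow_nonneg ht0.le _)]
                      _ = ENNReal.ofReal (t ^ (q⁻¹ * (N : ℝ))) * mB := by
                          rw [finrank_euclideanSpace_fin, ← Real.rpow_natCast (t ^ q⁻¹) N,
                            ← Real.rpow_mul ht0.le]
                _ = (∫⁻ t in Set.Ioi 1, ENNReal.ofReal (t ^ (q⁻¹ * (N : ℝ)))) * mB :=
                    lintegral_mul_const' _ _ hmBlt.ne
                _ < ∞ := ENNReal.mul_lt_top
                    ((integrableOn_Ioi_rpow_of_lt hr one_pos).setLIntegral_lt_top) hmBlt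

lemma intOn_compl_rpow {N : ℕ} {p : ℝ} (hp : (N : ℝ) < p) :
    IntegrableOn (fun z : EuclideanSpace ℝ (Fin N) => ‖z‖ ^ (-p))
      (ball 0 1)ᶜ volume := by
  have hp0 : 0 < p := lt_of_le_of_lt (Nat.cast_nonneg N) hp
  have hmeas : Measurable fun z : EuclideanSpace ℝ (Fin N) => ‖z‖ ^ (-p) := by fun_prop
  have hint : Integrable (fun z : EuclideanSpace ℝ (Fin N) =>
      (2:ℝ) ^ p * (1 + ‖z‖) ^ (-p)) volume := by
    refine (integrable_one_add_norm ?_).const_mul _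
    rwa [finrank_euclideanSpace_fin]
  refine Integrable.mono' hint.restrict hmeas.aestronglyMeasurable.restrict ?_
  filter_upwards [ae_restrict_mem measurableSet_ball.compl] with z hz
  have h1 : (1:ℝ) ≤ ‖z‖ := by
    simpa [mem_ball_zero_iff] using hz
  have hz0 : (0:ℝ) < ‖z‖ := lt_of_lt_of_le one_pos h1
  rw [Real.norm_of_nonneg (rpow_nonneg (norm_nonneg _) _)]
  rw [Real.rpow_neg (norm_nonneg _), Real.rpow_neg (by positivity)]
  have key : (1 + ‖z‖) ^ p ≤ 2 ^ p * ‖z‖ ^ p := by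
    rw [← Real.mul_rpow (by norm_num) (norm_nonneg _)]
    exact Real.rpow_le_rpow (by positivity) (by linarith) hp0.le
  have hA : (0:ℝ) < ‖z‖ ^ p := by positivity
  have hB : (0:ℝ) < (1 + ‖z‖) ^ p := by positivity
  rw [mul_comm, ← div_eq_inv_mul, inv_eq_one_div, div_le_div_iff₀ hA hB]
  nlinarith [key]

lemma div_le_div_nonneg_denom {a b d : ℝ} (h : a ≤ b) (hd : 0 ≤ d) :
    a / d ≤ b / d := by
  rw [div_eq_mul_inv, div_eq_mul_inv]
  exact mul_le_mul_of_nonneg_right h (inv_nonneg.2 hd)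

/-- The radial majorant `min (b‖z‖²) 1 / ‖z‖^p`. -/
noncomputable def cutoffMajorant (N : ℕ) (b p : ℝ) (z : EuclideanSpace ℝ (Fin N)) : ℝ :=
  min (b * ‖z‖ ^ (2:ℝ)) 1 / ‖z‖ ^ p

lemma cutoffMajorant_nonneg {N : ℕ} {b p : ℝ} (hb : 0 ≤ b) (z : EuclideanSpace ℝ (Fin N)) :
    0 ≤ cutoffMajorant N b p z := by
  unfold cutoffMajorant
  have : 0 ≤ min (b * ‖z‖ ^ (2:ℝ)) 1 := le_min (by positivity) one_pos.le
  positivity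

lemma cutoffMajorant_measurable {N : ℕ} (b p : ℝ) :
    Measurable (cutoffMajorant N b p) := by
  unfold cutoffMajorant
  fun_prop

lemma cutoffMajorant_mono {N : ℕ} {b b' p : ℝ} (h : b ≤ b') (z : EuclideanSpace ℝ (Fin N)) :
    cutoffMajorant N b p z ≤ cutoffMajorant N b' p z := by
  unfold cutoffMajorant
  refine div_le_div_nonneg_denom (min_le_min ?_ le_rfl) (by positivity)
  exact mul_le_mul_of_nonneg_right h (by positivity)

lemma cutoffMajorant_integrable {N : ℕ} {b p : ℝ} (hb : 0 ≤ b)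
    (hp1 : (N : ℝ) < p) (hp2 : p < (N : ℝ) + 2) :
    Integrable (cutoffMajorant N b p) volume := by
  have hp0 : 0 < p := lt_of_le_of_lt (Nat.cast_nonneg N) hp1
  rw [← integrableOn_univ, ← union_compl_self (ball (0 : EuclideanSpace ℝ (Fin N)) 1)]
  refine IntegrableOn.union ?_ ?_
  · -- near the origin: bounded by b * ‖z‖ ^ (2 - p)
    refine Integrable.mono' (g := fun z => b * ‖z‖ ^ (2 - p))
      (((intOn_ball_rpow (by linarith)).const_mul b)) 
      (cutoffMajorant_measurable b p).aestronglyMeasurable.restrict ?_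
    filter_upwards [] with z
    rw [Real.norm_of_nonneg (cutoffMajorant_nonneg hb z)]
    rcases eq_or_lt_of_le (norm_nonneg z) with h0 | h0
    · unfold cutoffMajorant
      rw [← h0, Real.zero_rpow (by norm_num : (2:ℝ) ≠ 0), mul_zero, min_eq_left one_pos.le,
        zero_div]
      positivity
    · unfold cutoffMajorant
      calc min (b * ‖z‖ ^ (2:ℝ)) 1 / ‖z‖ ^ p ≤ (b * ‖z‖ ^ (2:ℝ)) / ‖z‖ ^ p :=
            div_le_div_nonneg_denom (min_le_left _ _) (by positivity)
        _ = b * ‖z‖ ^ (2 - p) := by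
            rw [Real.rpow_sub h0, mul_div_assoc]
  · -- away from the origin: bounded by ‖z‖ ^ (-p)
    refine Integrable.mono' (intOn_compl_rpow hp1)
      (cutoffMajorant_measurable b p).aestronglyMeasurable.restrict ?_
    filter_upwards [ae_restrict_mem measurableSet_ball.compl] with z hz
    have h1 : (1:ℝ) ≤ ‖z‖ := by simpa [mem_ball_zero_iff] using hz
    have h0 : (0:ℝ) < ‖z‖ := lt_of_lt_of_le one_pos h1
    rw [Real.norm_of_nonneg (cutoffMajorant_nonneg hb z)]
    unfold cutoffMajorant
    rw [Real.rpow_neg (norm_nonneg _), ← one_div]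
    exact div_le_div_nonneg_denom (min_le_right _ _) (by positivity)

/-- Vanishing commutator estimate for cutoffs at infinity: if `(uₙ)` is bounded in
`H^s(ℝ^N)` and `uₙ → u` strongly in `L²_loc`, and `η_R` are cutoffs vanishing on `B_R`,
equal to `1` outside `B_{2R}`, with `|∇η_R| ≤ c/R`, then
`lim_{R→∞} limsup_n ∬ |η_R(x) − η_R(y)|²/|x−y|^{N+2s} uₙ(x)² dx dy = 0`. -/
theorem cutoff_commutator_vanishing (N : ℕ) (s c M : ℝ) (hs : s ∈ Set.Ioo (0 : ℝ) 1)
    (hN : 2 * s < N) (hc : 0 < c)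
    (η : ℝ → EuclideanSpace ℝ (Fin N) → ℝ)
    (hη01 : ∀ R : ℝ, 0 < R → ∀ x, η R x ∈ Set.Icc (0 : ℝ) 1)
    (hηlip : ∀ R : ℝ, 0 < R → ∀ x y, |η R x - η R y| ≤ c / R * dist x y)
    (hη0 : ∀ R : ℝ, 0 < R → ∀ x ∈ Metric.ball (0 : EuclideanSpace ℝ (Fin N)) R, η R x = 0)
    (hη1 : ∀ R : ℝ, 0 < R → ∀ x ∉ Metric.ball (0 : EuclideanSpace ℝ (Fin N)) (2 * R),
      η R x = 1)
    (u : ℕ → EuclideanSpace ℝ (Fin N) → ℝ) (ulim : EuclideanSpace ℝ (Fin N) → ℝ)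
    (hmem : ∀ n, MemLp (u n) 2 volume)
    (hbdd : ∀ n, (∫ x, u n x ^ 2) +
      (∫ x, ∫ y, (u n x - u n y) ^ 2 / dist x y ^ ((N : ℝ) + 2 * s)) ≤ M)
    (hloc : ∀ r : ℝ, 0 < r →
      Tendsto (fun n => ∫ x in Metric.ball (0 : EuclideanSpace ℝ (Fin N)) r,
        (u n x - ulim x) ^ 2) atTop (nhds 0)) :
    Tendsto (fun R : ℝ =>
        limsup (fun n =>
          ∫ x, ∫ y, (η R x - η R y) ^ 2 / dist x y ^ ((N : ℝ) + 2 * s) * u n x ^ 2) atTop)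
      atTop (nhds 0) := by
  obtain ⟨hs0, hs1⟩ := hs
  set p : ℝ := (N : ℝ) + 2 * s with hpdef
  have hp1 : (N : ℝ) < p := by simp only [hpdef]; linarith
  have hp2 : p < (N : ℝ) + 2 := by simp only [hpdef]; linarith
  have hp0 : 0 < p := lt_of_le_of_lt (Nat.cast_nonneg N) hp1
  -- notation
  set Φ : ℝ → EuclideanSpace ℝ (Fin N) → ℝ := fun b => cutoffMajorant N b p with hΦdef
  set K : ℝ → ℝ := fun b => ∫ z, Φ b z with hKdef
  have hKnonneg : ∀ b : ℝ, 0 ≤ b → 0 ≤ K b := fun b hb =>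
    integral_nonneg fun z => cutoffMajorant_nonneg hb z
  -- pointwise bound
  have hpt : ∀ R : ℝ, 0 < R → ∀ x y : EuclideanSpace ℝ (Fin N),
      (η R x - η R y) ^ 2 / dist x y ^ p ≤ Φ ((c / R) ^ 2) (x - y) := by
    intro R hR x y
    rcases eq_or_lt_of_le (dist_nonneg (x := x) (y := y)) with hd0 | hd0
    · have hxy : x = y := by rwa [eq_comm, dist_eq_zero] at hd0
      subst hxy
      rw [sub_self, zero_pow two_ne_zero, zero_div]
      exact cutoffMajorant_nonneg (sq_nonneg _) _
    · have hd : dist x y = ‖x - y‖ := dist_eq_norm x y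
      show _ ≤ min ((c / R) ^ 2 * ‖x - y‖ ^ (2:ℝ)) 1 / ‖x - y‖ ^ p
      rw [← hd]
      refine div_le_div_nonneg_denom (le_min ?_ ?_) (rpow_nonneg dist_nonneg _)
      · have h1 : |η R x - η R y| ≤ c / R * dist x y := hηlip R hR x y
        have h2 : (η R x - η R y) ^ 2 ≤ (c / R * dist x y) ^ 2 := by
          rw [← sq_abs]
          exact pow_le_pow_left₀ (abs_nonneg _) h1 2
        calc (η R x - η R y) ^ 2 ≤ (c / R * dist x y) ^ 2 := h2
          _ = (c / R) ^ 2 * dist x y ^ (2:ℕ) := by ring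
          _ = (c / R) ^ 2 * dist x y ^ (2:ℝ) := by
              rw [← Real.rpow_natCast (dist x y) 2]; norm_num
      · obtain ⟨hx0, hx1⟩ := hη01 R hR x
        obtain ⟨hy0, hy1⟩ := hη01 R hR y
        have : |η R x - η R y| ≤ 1 := by
          rw [abs_sub_le_iff]; constructor <;> linarith
        calc (η R x - η R y) ^ 2 = |η R x - η R y| ^ 2 := (sq_abs _).symm
          _ ≤ 1 ^ 2 := pow_le_pow_left₀ (abs_nonneg _) this 2
          _ = 1 := one_pow 2
  -- inner integral bound
  have hinner : ∀ R : ℝ, 0 < R → ∀ x : EuclideanSpace ℝ (Fin N),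
      (∫ y, (η R x - η R y) ^ 2 / dist x y ^ p) ≤ K ((c / R) ^ 2) := by
    intro R hR x
    have hb : (0:ℝ) ≤ (c / R) ^ 2 := sq_nonneg _
    have hint : Integrable (fun y => Φ ((c / R) ^ 2) (x - y)) volume :=
      (cutoffMajorant_integrable hb hp1 hp2).comp_sub_left x
    have htrans : (∫ y, Φ ((c / R) ^ 2) (x - y)) = K ((c / R) ^ 2) :=
      integral_sub_left_eq_self (Φ ((c / R) ^ 2)) volume x
    rw [← htrans]
    refine integral_mono_of_nonneg ?_ hint (Eventually.of_forall fun y => hpt R hR x y)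
    exact Eventually.of_forall fun y =>
      div_nonneg (sq_nonneg _) (rpow_nonneg dist_nonneg _)
  -- L² bound
  have hI2 : ∀ n, (∫ x, u n x ^ 2) ≤ M := by
    intro n
    have h2 : 0 ≤ ∫ x, ∫ y, (u n x - u n y) ^ 2 / dist x y ^ ((N : ℝ) + 2 * s) :=
      integral_nonneg fun x => integral_nonneg fun y =>
        div_nonneg (sq_nonneg _) (rpow_nonneg dist_nonneg _)
    linarith [hbdd n]
  have hM0 : 0 ≤ M := le_trans (integral_nonneg fun x => sq_nonneg (u 0 x)) (hI2 0)
  -- double integral bounds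
  have hFnonneg : ∀ R : ℝ, ∀ n,
      0 ≤ ∫ x, ∫ y, (η R x - η R y) ^ 2 / dist x y ^ ((N : ℝ) + 2 * s) * u n x ^ 2 :=
    fun R n => integral_nonneg fun x => integral_nonneg fun y =>
      mul_nonneg (div_nonneg (sq_nonneg _) (rpow_nonneg dist_nonneg _)) (sq_nonneg _)
  have hFbound : ∀ R : ℝ, 0 < R → ∀ n,
      (∫ x, ∫ y, (η R x - η R y) ^ 2 / dist x y ^ ((N : ℝ) + 2 * s) * u n x ^ 2)
        ≤ K ((c / R) ^ 2) * M := by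
    intro R hR n
    have hb : (0:ℝ) ≤ (c / R) ^ 2 := sq_nonneg _
    have hrw : ∀ x, (∫ y, (η R x - η R y) ^ 2 / dist x y ^ ((N : ℝ) + 2 * s) * u n x ^ 2)
        = (∫ y, (η R x - η R y) ^ 2 / dist x y ^ p) * u n x ^ 2 := fun x =>
      integral_mul_const _ _
    calc (∫ x, ∫ y, (η R x - η R y) ^ 2 / dist x y ^ ((N : ℝ) + 2 * s) * u n x ^ 2)
        = ∫ x, (∫ y, (η R x - η R y) ^ 2 / dist x y ^ p) * u n x ^ 2 := by
          exact integral_congr_ae (Eventually.of_forall fun x => hrw x)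
      _ ≤ ∫ x, K ((c / R) ^ 2) * u n x ^ 2 := by
          refine integral_mono_of_nonneg ?_ (((hmem n).integrable_sq).const_mul _) ?_
          · exact Eventually.of_forall fun x => mul_nonneg
              (integral_nonneg fun y => div_nonneg (sq_nonneg _) (rpow_nonneg dist_nonneg _))
              (sq_nonneg _)
          · exact Eventually.of_forall fun x =>
              mul_le_mul_of_nonneg_right (hinner R hR x) (sq_nonneg _)
      _ = K ((c / R) ^ 2) * ∫ x, u n x ^ 2 := integral_const_mul _ _
      _ ≤ K ((c / R) ^ 2) * M :=
          mul_le_mul_of_nonneg_left (hI2 n) (hKnonneg _ hb)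
  -- limsup bounds
  have hLub : ∀ R : ℝ, 0 < R →
      limsup (fun n => ∫ x, ∫ y,
        (η R x - η R y) ^ 2 / dist x y ^ ((N : ℝ) + 2 * s) * u n x ^ 2) atTop
        ≤ K ((c / R) ^ 2) * M := by
    intro R hR
    refine limsup_le_of_le (isCoboundedUnder_le_of_le atTop fun n => hFnonneg R n)
      (Eventually.of_forall fun n => hFbound R hR n)
  have hLlb : ∀ R : ℝ, 0 < R →
      0 ≤ limsup (fun n => ∫ x, ∫ y,
        (η R x - η R y) ^ 2 / dist x y ^ ((N : ℝ) + 2 * s) * u n x ^ 2) atTop := by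
    intro R hR
    refine le_limsup_of_frequently_le (Frequently.of_forall fun n => hFnonneg R n) ?_
    exact isBoundedUnder_of ⟨K ((c / R) ^ 2) * M, fun n => hFbound R hR n⟩
  -- K tends to zero
  have hKto : Tendsto (fun R : ℝ => K ((c / R) ^ 2)) atTop (nhds 0) := by
    have h0 : (0:ℝ) = ∫ _z : EuclideanSpace ℝ (Fin N), (0:ℝ) := by simp
    rw [h0]
    refine tendsto_integral_filter_of_dominated_convergence (cutoffMajorant N (c ^ 2) p)
      (Eventually.of_forall fun R => (cutoffMajorant_measurable _ _).aestronglyMeasurable)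
      ?_ (cutoffMajorant_integrable (sq_nonneg c) hp1 hp2) ?_
    · filter_upwards [eventually_ge_atTop (1:ℝ)] with R hR
      refine Eventually.of_forall fun z => ?_
      rw [Real.norm_of_nonneg (cutoffMajorant_nonneg (sq_nonneg _) z)]
      refine cutoffMajorant_mono ?_ z
      have h1 : c / R ≤ c := div_le_self hc.le hR
      have h2 : 0 ≤ c / R := div_nonneg hc.le (le_trans one_pos.le hR)
      exact pow_le_pow_left₀ h2 h1 2
    · refine Eventually.of_forall fun z => ?_
      rcases eq_or_lt_of_le (norm_nonneg z) with h0' | h0'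
      · have hz : ∀ b : ℝ, Φ b z = 0 := by
          intro b
          show min (b * ‖z‖ ^ (2:ℝ)) 1 / ‖z‖ ^ p = 0
          rw [← h0', Real.zero_rpow (by norm_num : (2:ℝ) ≠ 0), mul_zero,
            min_eq_left one_pos.le, zero_div]
        have : (fun R : ℝ => Φ ((c / R) ^ 2) z) = fun _ => (0:ℝ) := funext fun R => hz _
        rw [this]
        exact tendsto_const_nhds
      · have h1 : Tendsto (fun R : ℝ => c / R) atTop (nhds 0) :=
          Tendsto.div_atTop tendsto_const_nhds tendsto_id
        have h2 : Tendsto (fun R : ℝ => (c / R) ^ 2) atTop (nhds 0) := by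
          have := h1.pow 2
          simpa using this
        have h3 : Tendsto (fun R : ℝ => (c / R) ^ 2 * ‖z‖ ^ (2:ℝ)) atTop (nhds 0) := by
          have := h2.mul_const (‖z‖ ^ (2:ℝ))
          simpa using this
        have h4 : Tendsto (fun R : ℝ => min ((c / R) ^ 2 * ‖z‖ ^ (2:ℝ)) 1) atTop
            (nhds 0) := by
          have := h3.min (tendsto_const_nhds (x := (1:ℝ)))
          simpa using this
        have h5 : Tendsto (fun R : ℝ => min ((c / R) ^ 2 * ‖z‖ ^ (2:ℝ)) 1 / ‖z‖ ^ p) atTop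
            (nhds 0) := by
          have := h4.div_const (‖z‖ ^ p)
          simpa using this
        exact h5
  -- conclude by squeezing
  have hKMto : Tendsto (fun R : ℝ => K ((c / R) ^ 2) * M) atTop (nhds 0) := by
    have := hKto.mul_const M
    simpa using this
  refine tendsto_of_tendsto_of_tendsto_of_le_of_le' tendsto_const_nhds hKMto ?_ ?_
  · filter_upwards [eventually_gt_atTop (0:ℝ)] with R hR
    exact hLlb R hR
  · filter_upwards [eventually_gt_atTop (0:ℝ)] with R hR
    exact hLub R hR
end
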